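/- Let λ and β be positive random variables on a probability space (Ω, 𝓕, ℙ) satisfying 𝔼[(β/λ^{1/β}) ((β+1)/β)^{(β+1)/β}] < ∞. If ℙ(β < 1) > 0, then the mixed Kies density f(t) = 𝔼[h(t; λ, β)] tends to +∞ as t → 0+. -/

import Mathlib

open MeasureTheory Filter Set

lemma kies_exp_bound {x a : ℝ} (hx : 0 < x) (ha : 0 < a) :
    Real.exp (-x) ≤ a ^ a * x ^ (-a) := by
  have hxa : (0:ℝ) < x ^ a := Real.rpow_pos_of_pos hx a
  have h1 : x ≤ a * Real.exp (x / a) := by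
    have := Real.add_one_le_exp (x / a)
    have h2 : x / a ≤ Real.exp (x / a) := by linarith
    calc x = a * (x / a) := by field_simp
      _ ≤ a * Real.exp (x / a) := by nlinarith
  have h3 : x ^ a ≤ (a * Real.exp (x / a)) ^ a :=
    Real.rpow_le_rpow hx.le h1 ha.le
  have h4 : (a * Real.exp (x / a)) ^ a = a ^ a * Real.exp x := by
    rw [Real.mul_rpow ha.le (Real.exp_pos _).le, ← Real.exp_mul]
    congr 1
    field_simp
  have key : x ^ a ≤ a ^ a * Real.exp x := h4 ▸ h3
  have key2 : Real.exp (-x) * x ^ a ≤ a ^ a := by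
    rw [Real.exp_neg, inv_mul_le_iff₀ (Real.exp_pos x)]
    linarith [key, mul_comm (a ^ a) (Real.exp x)]
  have hprod : x ^ a * x ^ (-a) = 1 := by
    rw [← Real.rpow_add hx]; simp
  calc Real.exp (-x) = Real.exp (-x) * (x ^ a * x ^ (-a)) := by rw [hprod]; ring
    _ = (Real.exp (-x) * x ^ a) * x ^ (-a) := by ring
    _ ≤ a ^ a * x ^ (-a) :=
        mul_le_mul_of_nonneg_right key2 (Real.rpow_nonneg hx.le _)

lemma kies_dom_bound {t l b : ℝ} (ht : 0 < t) (ht1 : t < 1) (hl : 0 < l) (hb : 0 < b) :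
    l * b * t ^ (b - 1) * (1 - t) ^ (-(b + 1)) * Real.exp (-l * (t / (1 - t)) ^ b)
      ≤ t ^ (-2 : ℝ) * (b / l ^ (1 / b) * ((b + 1) / b) ^ ((b + 1) / b)) := by
  set a : ℝ := (b + 1) / b with ha_def
  have ha : 0 < a := by positivity
  have h1t : 0 < 1 - t := by linarith
  set s : ℝ := t / (1 - t) with hs_def
  have hs : 0 < s := by positivity
  have hsb : 0 < s ^ b := Real.rpow_pos_of_pos hs b
  have hx : 0 < l * s ^ b := by positivity
  have hexp : Real.exp (-(l * s ^ b)) ≤ a ^ a * (l * s ^ b) ^ (-a) := kies_exp_bound hx ha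
  have hC : 0 ≤ l * b * t ^ (b - 1) * (1 - t) ^ (-(b + 1)) := by positivity
  have step1 : l * b * t ^ (b - 1) * (1 - t) ^ (-(b + 1)) * Real.exp (-l * (t / (1 - t)) ^ b)
      ≤ l * b * t ^ (b - 1) * (1 - t) ^ (-(b + 1)) * (a ^ a * (l * s ^ b) ^ (-a)) := by
    rw [neg_mul]
    exact mul_le_mul_of_nonneg_left hexp hC
  refine step1.trans_eq ?_
  have hbne : b ≠ 0 := hb.ne'
  have hba : b * (-a) = -(b + 1) := by rw [ha_def]; field_simp
  have e1 : (l * s ^ b) ^ (-a) = l ^ (-a) * s ^ (-(b+1)) := by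
    rw [Real.mul_rpow hl.le hsb.le, ← Real.rpow_mul hs.le, hba]
  have e2 : s ^ (-(b+1)) = t ^ (-(b+1)) / (1 - t) ^ (-(b+1)) := by
    rw [hs_def, Real.div_rpow ht.le h1t.le]
  have e3 : (1 - t) ^ (-(b + 1)) * (t ^ (-(b+1)) / (1 - t) ^ (-(b+1)))
      = t ^ (-(b+1)) := by
    have : (1 - t) ^ (-(b+1)) ≠ 0 := (Real.rpow_pos_of_pos h1t _).ne'
    field_simp
  have e4 : t ^ (b - 1) * t ^ (-(b+1)) = t ^ (-2 : ℝ) := by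
    rw [← Real.rpow_add ht]; congr 1; ring
  have e5 : l * l ^ (-a) = (l ^ (1 / b))⁻¹ := by
    have h5 : l * l ^ (-a) = l ^ (1 + -a) := by rw [Real.rpow_add hl, Real.rpow_one]
    rw [h5, ← Real.rpow_neg hl.le]
    congr 1
    rw [ha_def, add_div, div_self hbne]; ring
  calc l * b * t ^ (b - 1) * (1 - t) ^ (-(b + 1)) * (a ^ a * (l * s ^ b) ^ (-a))
      = (l * l ^ (-a)) * b * (t ^ (b-1) * ((1 - t) ^ (-(b + 1)) * (t ^ (-(b+1)) / (1 - t) ^ (-(b+1))))) * a ^ a := by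
        rw [e1, e2]; ring
    _ = (l ^ (1 / b))⁻¹ * b * (t ^ (b-1) * t ^ (-(b+1))) * a ^ a := by rw [e3, e5]
    _ = t ^ (-2 : ℝ) * (b / l ^ (1 / b) * a ^ a) := by rw [e4]; ring

lemma kies_meas_rpow {Ω : Type*} [MeasurableSpace Ω] {g h : Ω → ℝ}
    (hg : Measurable g) (hh : Measurable h) (hgpos : ∀ ω, 0 < g ω) :
    Measurable (fun ω => g ω ^ h ω) := by
  have : (fun ω => g ω ^ h ω) = fun ω => Real.exp (Real.log (g ω) * h ω) :=
    funext fun ω => Real.rpow_def_of_pos (hgpos ω) _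
  rw [this]
  exact (hg.log.mul hh).exp

lemma kies_lower_bound {t l b eps L : ℝ} (ht : 0 < t) (ht1 : t ≤ 1/2)
    (heps : 0 < eps) (hb1 : eps ≤ b) (hb2 : b ≤ 1 - eps) (hl1 : eps ≤ l) (hl2 : l ≤ L) :
    eps * eps * Real.exp (-L) * t ^ (-eps) ≤
      l * b * t ^ (b - 1) * (1 - t) ^ (-(b + 1)) * Real.exp (-l * (t / (1 - t)) ^ b) := by
  have hl : 0 < l := lt_of_lt_of_le heps hl1
  have hb : 0 < b := lt_of_lt_of_le heps hb1
  have h1t : 0 < 1 - t := by linarith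
  have htle1 : t ≤ 1 := by linarith
  have hP1 : eps * eps ≤ l * b := mul_le_mul hl1 hb1 heps.le hl.le
  have hP2 : t ^ (-eps) ≤ t ^ (b - 1) :=
    Real.rpow_le_rpow_of_exponent_ge ht htle1 (by linarith)
  have hP3 : (1 : ℝ) ≤ (1 - t) ^ (-(b + 1)) :=
    Real.one_le_rpow_of_pos_of_le_one_of_nonpos h1t (by linarith) (by linarith)
  have hs1 : t / (1 - t) ≤ 1 := by
    rw [div_le_one h1t]; linarith
  have hsb1 : (t / (1 - t)) ^ b ≤ 1 :=
    Real.rpow_le_one (by positivity) hs1 hb.le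
  have hP4 : Real.exp (-L) ≤ Real.exp (-l * (t / (1 - t)) ^ b) := by
    apply Real.exp_le_exp.mpr
    have h0 : 0 ≤ (t / (1 - t)) ^ b := Real.rpow_nonneg (by positivity) b
    nlinarith
  have step1 : eps * eps * t ^ (-eps) ≤ l * b * t ^ (b - 1) :=
    mul_le_mul hP1 hP2 (Real.rpow_nonneg ht.le _) (by positivity)
  have step2 : eps * eps * t ^ (-eps) * 1 ≤ l * b * t ^ (b - 1) * (1 - t) ^ (-(b + 1)) :=
    mul_le_mul step1 hP3 zero_le_one (by positivity)
  calc eps * eps * Real.exp (-L) * t ^ (-eps)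
      = (eps * eps * t ^ (-eps) * 1) * Real.exp (-L) := by ring
    _ ≤ (l * b * t ^ (b - 1) * (1 - t) ^ (-(b + 1))) * Real.exp (-l * (t / (1 - t)) ^ b) :=
        mul_le_mul step2 hP4 (Real.exp_pos _).le (by positivity)

theorem mixed_kies_density_left_endpoint_beta_lt_one
    {Ω : Type*} [MeasurableSpace Ω] (μ : Measure Ω) [IsProbabilityMeasure μ]
    (lam beta : Ω → ℝ) (hlam_meas : Measurable lam) (hbeta_meas : Measurable beta)
    (hlam_pos : ∀ ω, 0 < lam ω) (hbeta_pos : ∀ ω, 0 < beta ω)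
    (hcond1 : Integrable (fun ω =>
        beta ω / lam ω ^ (1 / beta ω) *
          ((beta ω + 1) / beta ω) ^ ((beta ω + 1) / beta ω)) μ)
    (hbeta_lt : 0 < μ {ω | beta ω < 1})
    (f : ℝ → ℝ)
    (hf : ∀ t, f t = ∫ ω, lam ω * beta ω * t ^ (beta ω - 1) * (1 - t) ^ (-(beta ω + 1)) *
        Real.exp (-(lam ω) * (t / (1 - t)) ^ (beta ω)) ∂μ) :
    Tendsto f (nhdsWithin 0 (Set.Ioi 0)) atTop := by
  classical
  set A : ℕ → Set Ω := fun n => {ω | 1/((n:ℝ)+1) ≤ beta ω ∧ beta ω ≤ 1 - 1/((n:ℝ)+1) ∧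
      1/((n:ℝ)+1) ≤ lam ω ∧ lam ω ≤ (n:ℝ)+1} with hA_def
  have hAm : ∀ n, MeasurableSet (A n) := by
    intro n
    have hEq : A n = (beta ⁻¹' Icc (1/((n:ℝ)+1)) (1 - 1/((n:ℝ)+1))) ∩
        (lam ⁻¹' Icc (1/((n:ℝ)+1)) ((n:ℝ)+1)) := by
      ext ω
      simp only [hA_def, Set.mem_setOf_eq, Set.mem_inter_iff, Set.mem_preimage, Set.mem_Icc]
      tauto
    rw [hEq]
    exact (hbeta_meas measurableSet_Icc).inter (hlam_meas measurableSet_Icc)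
  have hcover : {ω | beta ω < 1} ⊆ ⋃ n, A n := by
    intro ω hω
    simp only [Set.mem_setOf_eq] at hω
    have hb := hbeta_pos ω
    have hl := hlam_pos ω
    have h1b : 0 < 1 - beta ω := by linarith
    obtain ⟨n, hn⟩ := exists_nat_ge
      (max (max (1/beta ω) (1/(1 - beta ω))) (max (1/lam ω) (lam ω)))
    have hn1 : (0:ℝ) < (n:ℝ) + 1 := by positivity
    have h_ineq : ∀ y : ℝ, 0 < y → 1/y ≤ (n:ℝ)+1 → 1/((n:ℝ)+1) ≤ y := by
      intro y hy h
      have h2 : 1/((n:ℝ)+1) ≤ 1/(1/y) := one_div_le_one_div_of_le (by positivity) h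
      rwa [one_div_one_div] at h2
    have hmax1 : 1/beta ω ≤ (n:ℝ)+1 := by
      have := le_max_left (max (1/beta ω) (1/(1 - beta ω))) (max (1/lam ω) (lam ω))
      have := le_max_left (1/beta ω) (1/(1 - beta ω))
      linarith [le_max_left (1/beta ω) (1/(1 - beta ω)),
        le_max_left (max (1/beta ω) (1/(1 - beta ω))) (max (1/lam ω) (lam ω))]
    have hmax2 : 1/(1 - beta ω) ≤ (n:ℝ)+1 := by
      linarith [le_max_right (1/beta ω) (1/(1 - beta ω)),
        le_max_left (max (1/beta ω) (1/(1 - beta ω))) (max (1/lam ω) (lam ω))]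
    have hmax3 : 1/lam ω ≤ (n:ℝ)+1 := by
      linarith [le_max_left (1/lam ω) (lam ω),
        le_max_right (max (1/beta ω) (1/(1 - beta ω))) (max (1/lam ω) (lam ω))]
    have hmax4 : lam ω ≤ (n:ℝ)+1 := by
      linarith [le_max_right (1/lam ω) (lam ω),
        le_max_right (max (1/beta ω) (1/(1 - beta ω))) (max (1/lam ω) (lam ω))]
    refine Set.mem_iUnion.mpr ⟨n, ?_, ?_, ?_, hmax4⟩
    · exact h_ineq _ hb hmax1
    · have := h_ineq _ h1b hmax2
      linarith
    · exact h_ineq _ hl hmax3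
  have hUnion_pos : μ (⋃ n, A n) ≠ 0 := by
    intro h0
    have hmono := measure_mono (μ := μ) hcover
    rw [h0] at hmono
    exact absurd (le_antisymm hmono (zero_le)) hbeta_lt.ne'
  obtain ⟨n, hn⟩ := MeasureTheory.exists_measure_pos_of_not_measure_iUnion_null hUnion_pos
  set eps : ℝ := 1/((n:ℝ)+1) with heps_def
  have heps : 0 < eps := by positivity
  set L : ℝ := (n:ℝ)+1 with hL_def
  have hμA : 0 < (μ (A n)).toReal := ENNReal.toReal_pos hn.ne' (measure_ne_top μ (A n))
  set c : ℝ := eps * eps * Real.exp (-L) * (μ (A n)).toReal with hc_def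
  have hc : 0 < c := by positivity
  have hbound : ∀ᶠ t in nhdsWithin 0 (Set.Ioi 0), c * t ^ (-eps) ≤ f t := by
    filter_upwards [Ioo_mem_nhdsGT_of_mem
      (show (0:ℝ) ∈ Ico 0 (1/2) by norm_num)] with t ht
    obtain ⟨ht0, ht12⟩ := ht
    have ht1 : t < 1 := by linarith
    have h1t : 0 < 1 - t := by linarith
    have hmeas : Measurable (fun ω => lam ω * beta ω * t ^ (beta ω - 1) *
        (1 - t) ^ (-(beta ω + 1)) * Real.exp (-(lam ω) * (t / (1 - t)) ^ (beta ω))) := by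
      refine Measurable.mul (Measurable.mul (Measurable.mul (hlam_meas.mul hbeta_meas) ?_) ?_) ?_
      · exact kies_meas_rpow measurable_const (hbeta_meas.sub measurable_const) (fun _ => ht0)
      · exact kies_meas_rpow measurable_const (hbeta_meas.add measurable_const).neg
          (fun _ => h1t)
      · exact ((hlam_meas.neg).mul (kies_meas_rpow measurable_const hbeta_meas
          (fun _ => by positivity))).exp
    have hnonneg : ∀ ω, 0 ≤ lam ω * beta ω * t ^ (beta ω - 1) *
        (1 - t) ^ (-(beta ω + 1)) * Real.exp (-(lam ω) * (t / (1 - t)) ^ (beta ω)) := by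
      intro ω
      have h1 := hlam_pos ω
      have h2 := hbeta_pos ω
      positivity
    have hint : Integrable (fun ω => lam ω * beta ω * t ^ (beta ω - 1) *
        (1 - t) ^ (-(beta ω + 1)) * Real.exp (-(lam ω) * (t / (1 - t)) ^ (beta ω))) μ := by
      refine Integrable.mono' (hcond1.const_mul (t ^ (-2:ℝ)))
        hmeas.aestronglyMeasurable ?_
      filter_upwards with ω
      rw [Real.norm_eq_abs, abs_of_nonneg (hnonneg ω)]
      exact kies_dom_bound ht0 ht1 (hlam_pos ω) (hbeta_pos ω)
    rw [hf t]
    have step_a : (eps * eps * Real.exp (-L) * t ^ (-eps)) * (μ (A n)).toReal ≤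
        ∫ ω in A n, lam ω * beta ω * t ^ (beta ω - 1) *
          (1 - t) ^ (-(beta ω + 1)) * Real.exp (-(lam ω) * (t / (1 - t)) ^ (beta ω)) ∂μ := by
      rw [mul_comm, ← smul_eq_mul]
      show μ.real (A n) • (eps * eps * Real.exp (-L) * t ^ (-eps)) ≤ _
      refine setIntegral_ge_of_const_le (hAm n) (measure_ne_top μ _) ?_ hint.integrableOn
      intro ω hω
      obtain ⟨h1, h2, h3, h4⟩ := hω
      exact kies_lower_bound ht0 ht12.le heps h1 h2 h3 h4
    have step_b : ∫ ω in A n, lam ω * beta ω * t ^ (beta ω - 1) *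
          (1 - t) ^ (-(beta ω + 1)) * Real.exp (-(lam ω) * (t / (1 - t)) ^ (beta ω)) ∂μ ≤
        ∫ ω, lam ω * beta ω * t ^ (beta ω - 1) *
          (1 - t) ^ (-(beta ω + 1)) * Real.exp (-(lam ω) * (t / (1 - t)) ^ (beta ω)) ∂μ :=
      setIntegral_le_integral hint (Filter.Eventually.of_forall hnonneg)
    calc c * t ^ (-eps)
        = (eps * eps * Real.exp (-L) * t ^ (-eps)) * (μ (A n)).toReal := by
          rw [hc_def]; ring
      _ ≤ _ := step_a.trans step_b
  have h3 : Tendsto (fun t : ℝ => t ^ (-eps)) (nhdsWithin 0 (Set.Ioi 0)) atTop := by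
    have h1 : Tendsto (fun t : ℝ => t ^ eps) (nhdsWithin 0 (Set.Ioi 0))
        (nhdsWithin 0 (Set.Ioi 0)) := by
      rw [tendsto_nhdsWithin_iff]
      constructor
      · have hc0 : ContinuousAt (fun t : ℝ => t ^ eps) 0 :=
          Real.continuousAt_rpow_const 0 eps (Or.inr heps.le)
        have h := hc0.tendsto
        rw [Real.zero_rpow heps.ne'] at h
        exact h.mono_left nhdsWithin_le_nhds
      · filter_upwards [self_mem_nhdsWithin] with t ht
        exact Real.rpow_pos_of_pos ht eps
    refine h1.inv_tendsto_nhdsGT_zero.congr' ?_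
    filter_upwards [self_mem_nhdsWithin] with t ht
    rw [Pi.inv_apply, ← Real.rpow_neg (le_of_lt ht)]
  exact tendsto_atTop_mono' _ hbound (Tendsto.const_mul_atTop hc h3)
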